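/- Under y_i ≠ 0, x_j ≠ x_k, z_i > 0, λ_i > 0, r > 0, the gradient with respect to p_i = (x_i, y_i, z_i, λ_i) of h_IJK(p_i) = (x_i + x_j)/(2(x_k − x_j)) + (x_i − x_j)((x_i² − R_i²) − (x_j² − R_j²))/(2(x_k − x_j) y_i²), with R_i = r z_i/λ_i, equals the zero vector if and only if both x_i = x_j and x_i² + y_i² − R_i² = x_j² − R_j² hold. -/

import Mathlib

/-- h_IJK as a function of the state of agent i (frame Σ_d, agents j, k fixed). -/
noncomputable def hIJKf (r xj Rj xk x y z l : ℝ) : ℝ :=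
  (x + xj) / (2 * (xk - xj))
    + (x - xj) * ((x^2 - (r * z / l)^2) - (xj^2 - Rj^2)) / (2 * (xk - xj) * y^2)

/-- The gradient of h_IJK with respect to p_i = (x_i, y_i, z_i, λ_i) vanishes
iff x_i = x_j and x_i² + y_i² − R_i² = x_j² − R_j², i.e. iff the radical axis
L_ij lies on the line JK. -/
theorem hIJK_grad_zero_iff
    (r x y z l xj Rj xk : ℝ) (hy : y ≠ 0) (hjk : xj ≠ xk)
    (hz : 0 < z) (hl : 0 < l) (hr : 0 < r) :
    (deriv (fun t : ℝ => hIJKf r xj Rj xk t y z l) x = 0 ∧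
     deriv (fun t : ℝ => hIJKf r xj Rj xk x t z l) y = 0 ∧
     deriv (fun t : ℝ => hIJKf r xj Rj xk x y t l) z = 0 ∧
     deriv (fun t : ℝ => hIJKf r xj Rj xk x y z t) l = 0) ↔
    (x = xj ∧ x^2 + y^2 - (r * z / l)^2 = xj^2 - Rj^2) := by
  have hD : xk - xj ≠ 0 := sub_ne_zero.mpr hjk.symm
  have hl0 : l ≠ 0 := hl.ne'
  have hr0 : r ≠ 0 := hr.ne'
  have hz0 : z ≠ 0 := hz.ne'
  set K : ℝ := (r * z / l)^2 with hK
  set B : ℝ := xj^2 - Rj^2 with hB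
  -- derivative in x
  have hdx : deriv (fun t : ℝ => hIJKf r xj Rj xk t y z l) x
      = 1 / (2 * (xk - xj))
        + (1 * ((x^2 - K) - B) + (x - xj) * ((2:ℕ) * x ^ 1))
            / (2 * (xk - xj) * y^2) := by
    have h1 : HasDerivAt (fun t : ℝ => (t + xj) / (2 * (xk - xj)))
        (1 / (2 * (xk - xj))) x := ((hasDerivAt_id x).add_const xj).div_const _
    have h2 : HasDerivAt (fun t : ℝ => (t - xj) * ((t^2 - K) - B))
        (1 * ((x^2 - K) - B) + (x - xj) * ((2:ℕ) * x ^ 1)) x :=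
      ((hasDerivAt_id x).sub_const xj).mul
        (((hasDerivAt_pow 2 x).sub_const K).sub_const B)
    exact ((h1.add (h2.div_const _)).congr_of_eventuallyEq
      (by filter_upwards with t; simp [hIJKf, hK, hB])).deriv
  -- derivative in y
  have hdy : deriv (fun t : ℝ => hIJKf r xj Rj xk x t z l) y
      = 0 + (0 * (2 * (xk - xj) * y^2)
          - (x - xj) * ((x^2 - K) - B) * (2 * (xk - xj) * ((2:ℕ) * y ^ 1)))
          / (2 * (xk - xj) * y^2)^2 := by
    have h1 : HasDerivAt (fun _ : ℝ => (x + xj) / (2 * (xk - xj))) 0 y :=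
      hasDerivAt_const _ _
    have h2 : HasDerivAt (fun t : ℝ => (x - xj) * ((x^2 - K) - B) / (2 * (xk - xj) * t^2))
        ((0 * (2 * (xk - xj) * y^2)
          - (x - xj) * ((x^2 - K) - B) * (2 * (xk - xj) * ((2:ℕ) * y ^ 1)))
          / (2 * (xk - xj) * y^2)^2) y :=
      (hasDerivAt_const y _).div ((hasDerivAt_pow 2 y).const_mul _)
        (by positivity)
    exact ((h1.add h2).congr_of_eventuallyEq
      (by filter_upwards with t; simp [hIJKf, hK, hB])).deriv
  -- derivative in z
  have hdz : deriv (fun t : ℝ => hIJKf r xj Rj xk x y t l) z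
      = 0 + (x - xj) * -((2:ℕ) * (r * z / l) ^ 1 * (r * 1 / l))
          / (2 * (xk - xj) * y^2) := by
    have h1 : HasDerivAt (fun _ : ℝ => (x + xj) / (2 * (xk - xj))) 0 z :=
      hasDerivAt_const _ _
    have hin : HasDerivAt (fun t : ℝ => r * t / l) (r * 1 / l) z :=
      ((hasDerivAt_id z).const_mul r).div_const l
    have h2 : HasDerivAt
        (fun t : ℝ => (x - xj) * ((x^2 - (r * t / l)^2) - B) / (2 * (xk - xj) * y^2))
        ((x - xj) * -((2:ℕ) * (r * z / l) ^ 1 * (r * 1 / l)) / (2 * (xk - xj) * y^2)) z :=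
      ((((hin.pow 2).const_sub (x^2)).sub_const B).const_mul (x - xj)).div_const _
    exact ((h1.add h2).congr_of_eventuallyEq
      (by filter_upwards with t; simp [hIJKf, hK, hB])).deriv
  -- derivative in l
  have hdl : deriv (fun t : ℝ => hIJKf r xj Rj xk x y z t) l
      = 0 + (x - xj) *
          -((2:ℕ) * (r * z / l) ^ 1 * ((0 * l - r * z * 1) / l^2))
          / (2 * (xk - xj) * y^2) := by
    have h1 : HasDerivAt (fun _ : ℝ => (x + xj) / (2 * (xk - xj))) 0 l :=
      hasDerivAt_const _ _
    have hin : HasDerivAt (fun t : ℝ => r * z / t) ((0 * l - r * z * 1) / l^2) l :=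
      (hasDerivAt_const l (r * z)).div (hasDerivAt_id l) hl0
    have h2 : HasDerivAt
        (fun t : ℝ => (x - xj) * ((x^2 - (r * z / t)^2) - B) / (2 * (xk - xj) * y^2))
        ((x - xj) * -((2:ℕ) * (r * z / l) ^ 1 * ((0 * l - r * z * 1) / l^2))
          / (2 * (xk - xj) * y^2)) l :=
      ((((hin.pow 2).const_sub (x^2)).sub_const B).const_mul (x - xj)).div_const _
    exact ((h1.add h2).congr_of_eventuallyEq
      (by filter_upwards with t; simp [hIJKf, hK, hB])).deriv
  rw [hdx, hdy, hdz, hdl]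
  constructor
  · rintro ⟨e1, _, e3, _⟩
    have hx : x = xj := by
      field_simp at e3
      have h2 : (2:ℝ) * r ^ 2 * z ≠ 0 := by positivity
      push_cast at e3
      have e3'' : (x - xj) * (2 * r ^ 2 * z) = 0 := by linear_combination -e3
      have e3' := (mul_eq_zero.mp e3'').resolve_right h2
      linarith
    rw [hx] at e1 ⊢
    refine ⟨rfl, ?_⟩
    field_simp at e1
    nlinarith [e1]
  · rintro ⟨hx, heq⟩
    rw [hx] at heq ⊢
    refine ⟨?_, by simp, by simp, by simp⟩
    field_simp
    nlinarith [heq]
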